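/- Let α > 0 and β = 1 − 1/(2α). If θ is a badly approximable real number, then the Archimedean spiral lattice Γ_{α,θ} is asymptotically β-relatively dense. -/

import Mathlib

/-- The Archimedean spiral lattice `Γ_{α,θ} = { n^α e^{2πnθi} : n ∈ ℤ, n ≥ 0 }`. -/
noncomputable def spiralLattice (α θ : ℝ) : Set ℂ :=
  {z : ℂ | ∃ n : ℕ, z = (((n : ℝ) ^ α : ℝ) : ℂ) *
    Complex.exp ((2 * Real.pi * n * θ : ℝ) * Complex.I)}

/-- `Γ` is asymptotically `β`-relatively dense. -/
def AsympRelativelyDense (β : ℝ) (Γ : Set ℂ) : Prop :=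
  ∃ r > 0, ∀ r₁ > r, ∃ M > 0, ∀ z : ℂ, M ≤ ‖z‖ →
    ∃ ζ ∈ Γ, 1 ≤ ‖ζ‖ ∧ ‖z - ζ‖ < r₁ * ‖z‖ ^ β

/-- `Γ` is asymptotically `β`-uniformly discrete. -/
def AsympUniformlyDiscrete (β : ℝ) (Γ : Set ℂ) : Prop :=
  ∃ s > 0, ∀ s₁, 0 < s₁ → s₁ < s → ∃ M > 0, ∀ z : ℂ, M ≤ ‖z‖ →
    {ζ ∈ Γ | 1 ≤ ‖ζ‖ ∧ ‖z - ζ‖ < s₁ * ‖z‖ ^ β}.Subsingleton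

/-- `θ` is badly approximable. -/
def BadlyApproximable (θ : ℝ) : Prop :=
  Irrational θ ∧ ∃ c > 0, ∀ p q : ℤ, 1 ≤ q → c ≤ (q : ℝ) * |(q : ℝ) * θ - (p : ℝ)|


lemma grid_cover (p q : ℤ) (hq : 0 < q) (hco : IsCoprime p q) (x : ℝ) :
    ∃ j : ℤ, 0 ≤ j ∧ j < q ∧ ∃ k : ℤ, |(j : ℝ) * ((p : ℝ) / q) - x - k| ≤ 1 / (2 * q) := by
  obtain ⟨u, v, huv⟩ := hco
  set m : ℤ := round ((q : ℝ) * x) with hm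
  refine ⟨(m * u) % q, Int.emod_nonneg _ hq.ne', Int.emod_lt_of_pos _ hq, ?_⟩
  refine ⟨-(m * v) - (m * u / q) * p, ?_⟩
  have hdiv := Int.emod_add_mul_ediv (m * u) q
  have hjp : ((m * u) % q) * p = m + q * (-(m * v) - (m * u / q) * p) := by
    linear_combination p * hdiv + m * huv
  have hq' : (0:ℝ) < (q:ℝ) := by exact_mod_cast hq
  have hjpR : (((m * u) % q : ℤ) : ℝ) * (p : ℝ)
      = (m : ℝ) + (q : ℝ) * (-((m : ℝ) * v) - ((m * u / q : ℤ) : ℝ) * p) := by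
    exact_mod_cast congrArg (Int.cast : ℤ → ℝ) hjp
  have key : ((((m * u) % q : ℤ)) : ℝ) * ((p:ℝ)/q) - ((-(m * v) - (m * u / q) * p : ℤ) : ℝ)
      = (m : ℝ) / q := by
    push_cast
    field_simp
    linear_combination hjpR
  rw [show (((m * u) % q : ℤ) : ℝ) * ((p:ℝ)/q) - x - ((-(m * v) - (m * u / q) * p : ℤ) : ℝ)
      = ((m:ℝ)/q - x) by rw [← key]; ring]
  have h1 : |(q:ℝ) * x - m| ≤ 1/2 := abs_sub_round ((q:ℝ) * x)
  have habs : |(m:ℝ)/q - x| = |(q:ℝ)*x - m| / q := by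
    rw [abs_sub_comm]
    rw [show x - (m:ℝ)/q = ((q:ℝ)*x - m)/q from by field_simp]
    rw [abs_div, abs_of_pos hq']
  rw [habs, div_le_div_iff₀ hq' (by positivity)]
  nlinarith

lemma gap_cover (θ c : ℝ) (hc : 0 < c)
    (hbad : ∀ p q : ℤ, 1 ≤ q → c ≤ (q : ℝ) * |(q : ℝ) * θ - (p : ℝ)|)
    (M : ℕ) (hM : 0 < M) (x : ℝ) :
    ∃ n : ℕ, n < M ∧ ∃ k : ℤ, |(n : ℝ) * θ - x - k| ≤ (1 / (2 * c) + 1) / M := by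
  obtain ⟨a, ha1, ha2⟩ := Real.exists_rat_abs_sub_le_and_den_le θ hM
  set q : ℤ := (a.den : ℤ) with hqdef
  set p : ℤ := a.num with hpdef
  have hq : 0 < q := by rw [hqdef]; exact_mod_cast a.pos
  have hqR : (0:ℝ) < (q:ℝ) := by exact_mod_cast hq
  have hMR : (0:ℝ) < (M:ℝ) := by exact_mod_cast hM
  have hco : IsCoprime p q := by
    rw [Int.isCoprime_iff_gcd_eq_one]
    rw [hpdef, hqdef, Int.gcd, Int.natAbs_natCast]; exact a.reduced
  have hcast : ((a : ℝ)) = (p : ℝ) / (q : ℝ) := by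
    rw [Rat.cast_def]; norm_cast
  -- q ≥ c * M
  have hqθ : |(q:ℝ) * θ - p| ≤ 1 / (M + 1) := by
    have heq : (q:ℝ) * θ - p = (q:ℝ) * (θ - (a:ℝ)) := by
      rw [hcast]; field_simp
    rw [heq, abs_mul, abs_of_pos hqR]
    calc (q:ℝ) * |θ - (a:ℝ)| ≤ (q:ℝ) * (1 / ((M + 1) * a.den)) := by
          exact mul_le_mul_of_nonneg_left ha1 hqR.le
      _ = 1 / (M + 1) := by
          rw [hqdef]; push_cast; have : (a.den:ℝ) ≠ 0 := by positivity
          field_simp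
  have hqM : c * M ≤ (q:ℝ) := by
    have h1 := hbad p q (by omega)
    have h2 : c ≤ (q:ℝ) * (1 / (M+1)) :=
      h1.trans (mul_le_mul_of_nonneg_left hqθ hqR.le)
    rw [mul_one_div, le_div_iff₀ (by positivity)] at h2
    nlinarith
  obtain ⟨j, hj0, hjq, k, hk⟩ := grid_cover p q hq hco x
  refine ⟨j.toNat, ?_, k, ?_⟩
  · have : j < (M : ℤ) := lt_of_lt_of_le hjq (Int.ofNat_le.mpr ha2)
    omega
  have hjR : ((j.toNat : ℕ) : ℝ) = (j : ℝ) := by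
    norm_cast; omega
  rw [hjR]
  have hsplit : (j:ℝ) * θ - x - k
      = (j:ℝ) * (θ - (p:ℝ)/q) + ((j:ℝ) * ((p:ℝ)/q) - x - k) := by ring
  have hb1 : |(j:ℝ) * (θ - (p:ℝ)/q)| ≤ 1 / M := by
    rw [abs_mul]
    have hja : |(j:ℝ)| ≤ (q:ℝ) := by
      rw [abs_of_nonneg (by exact_mod_cast hj0)]
      exact_mod_cast hjq.le
    have : |θ - (p:ℝ)/q| ≤ 1 / ((M+1) * q) := by
      rw [← hcast]
      calc |θ - (a:ℝ)| ≤ 1 / ((M + 1) * a.den) := ha1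
        _ = 1 / ((M+1) * q) := by rw [hqdef]; push_cast; ring
    calc |(j:ℝ)| * |θ - (p:ℝ)/q| ≤ (q:ℝ) * (1 / ((M+1) * q)) := by
          exact mul_le_mul hja this (abs_nonneg _) hqR.le
      _ = 1 / (M + 1) := by field_simp
      _ ≤ 1 / M := by
          apply div_le_div_of_nonneg_left one_pos.le hMR; linarith
  have hb2 : |(j:ℝ) * ((p:ℝ)/q) - x - k| ≤ 1 / (2 * (c * M)) := by
    refine hk.trans ?_
    apply div_le_div_of_nonneg_left one_pos.le (by positivity)
    nlinarith
  calc |(j:ℝ) * θ - x - k| ≤ |(j:ℝ) * (θ - (p:ℝ)/q)| + |(j:ℝ) * ((p:ℝ)/q) - x - k| := by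
        rw [hsplit]; exact abs_add_le _ _
    _ ≤ 1 / M + 1 / (2 * (c * M)) := add_le_add hb1 hb2
    _ = (1 / (2 * c) + 1) / M := by field_simp; ring

lemma radial_bound {α T t : ℝ} (hα : 0 < α) (hT : 0 < T) (ht : T/2 ≤ t) (htT : t ≤ T) :
    T ^ α - t ^ α ≤ (α + 1) * T ^ (α - 1) * (T - t) := by
  set u : ℝ := (T - t)/T with hu
  have hu0 : 0 ≤ u := div_nonneg (by linarith) hT.le
  have hu1 : u ≤ 1/2 := by rw [hu, div_le_iff₀ hT]; linarith
  have htu : T * (1 - u) = t := by rw [hu]; field_simp; ring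
  have hta : t ^ α = T ^ α * (1 - u) ^ α := by
    rw [← htu, Real.mul_rpow hT.le (by linarith)]
  have hTα : T ^ (α - 1) * T = T ^ α := by
    rw [← Real.rpow_add_one hT.ne', sub_add_cancel]
  have key : 1 - (α + 1) * u ≤ (1 - u) ^ α := by
    rcases le_total α 1 with h1 | h1
    · have h2 := Real.rpow_le_rpow_of_exponent_ge (by linarith : (0:ℝ) < 1 - u)
        (by linarith : (1:ℝ) - u ≤ 1) h1
      rw [Real.rpow_one] at h2
      nlinarith
    · have h2 := one_add_mul_self_le_rpow_one_add (by linarith : (-1:ℝ) ≤ -u) h1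
      have h3 : (1 + -u : ℝ) = 1 - u := by ring
      rw [h3] at h2
      nlinarith
  have hTα0 : (0:ℝ) ≤ T ^ α := Real.rpow_nonneg hT.le α
  calc T ^ α - t ^ α = T ^ α * (1 - (1 - u) ^ α) := by rw [hta]; ring
    _ ≤ T ^ α * ((α + 1) * u) := by
        apply mul_le_mul_of_nonneg_left (by nlinarith) hTα0
    _ = (α + 1) * T ^ (α - 1) * (T - t) := by
        rw [← hTα, hu]; field_simp

theorem badly_approx_implies_spiral_relatively_dense (α θ β : ℝ) (hα : 0 < α)
    (hβ : β = 1 - 1 / (2 * α)) (h : BadlyApproximable θ) :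
    AsympRelativelyDense β (spiralLattice α θ) := by
  obtain ⟨-, c, hc, hbad⟩ := h
  have hπ := Real.pi_pos
  set C' : ℝ := 1/(2*c) + 1 with hC'
  have hC'pos : 0 < C' := by positivity
  set K : ℝ := 2*Real.pi*C' + 4 with hK
  have hKpos : 0 < K := by positivity
  set r : ℝ := 2*(α+1) + 4*Real.pi*C' with hr
  have hrpos : 0 < r := by positivity
  refine ⟨r, hrpos, ?_⟩
  intro r₁ hr₁
  refine ⟨max 1 (K ^ (2*α)), lt_of_lt_of_le one_pos (le_max_left _ _), ?_⟩
  intro z hz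
  set R : ℝ := ‖z‖ with hR
  have hR1 : 1 ≤ R := le_trans (le_max_left _ _) hz
  have hR0 : 0 < R := by linarith
  set S : ℝ := R ^ (1/(2*α)) with hS
  have hSpos : 0 < S := Real.rpow_pos_of_pos hR0 _
  have hKS : K ≤ S := by
    have h1 : K ^ (2*α) ≤ R := le_trans (le_max_right _ _) hz
    have h2 : (K ^ (2*α)) ^ (1/(2*α)) ≤ S :=
      Real.rpow_le_rpow (by positivity) h1 (by positivity)
    have h3 : (2*α) * (1/(2*α)) = 1 := by field_simp
    rwa [← Real.rpow_mul hKpos.le, h3, Real.rpow_one] at h2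
  have hS4 : 4 ≤ S := le_trans (by nlinarith) hKS
  set T : ℝ := R ^ (1/α) with hTdef
  have hTpos : 0 < T := Real.rpow_pos_of_pos hR0 _
  have hT : S * S = T := by
    rw [hS, hTdef, ← Real.rpow_add hR0]
    congr 1
    field_simp
    first
    | done
    | norm_num
    | ring
  have hTαR : T ^ α = R := by
    rw [hTdef, ← Real.rpow_mul hR0.le, one_div, inv_mul_cancel₀ hα.ne', Real.rpow_one]
  set M : ℕ := ⌈S⌉₊ with hM
  have hM1 : S ≤ (M:ℝ) := Nat.le_ceil S
  have hM2 : (M:ℝ) < S + 1 := Nat.ceil_lt_add_one hSpos.le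
  have hMpos : 0 < M := Nat.ceil_pos.mpr hSpos
  set n1 : ℕ := ⌊T⌋₊ with hn1
  have hn1a : (n1:ℝ) ≤ T := Nat.floor_le hTpos.le
  have hn1b : T < (n1:ℝ) + 1 := Nat.lt_floor_add_one T
  have hT4S : 4*S ≤ T := by nlinarith [hT, hS4]
  have hMn1 : M + 1 < n1 := by
    have : (M:ℝ) + 1 < (n1:ℝ) := by nlinarith
    exact_mod_cast this
  set b : ℕ := n1 + 1 - M with hb
  have hbM : b + M = n1 + 1 := by omega
  have hb1 : 1 ≤ b := by omega
  clear_value C' K r R S T M n1 b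
  obtain ⟨j, hjM, k, hk⟩ :=
    gap_cover θ c hc hbad M hMpos (Complex.arg z / (2*Real.pi) - (b:ℝ)*θ)
  set n : ℕ := b + j with hn
  clear_value n
  have hnn1 : n ≤ n1 := by omega
  have hnT : (n:ℝ) ≤ T := le_trans (Nat.cast_le.mpr hnn1) hn1a
  have hn1' : 1 ≤ n := by omega
  have hnαR : (n:ℝ)^α ≤ R := by
    calc (n:ℝ)^α ≤ T^α := Real.rpow_le_rpow (Nat.cast_nonneg n) hnT hα.le
      _ = R := hTαR
  have h1ζ : (1:ℝ) ≤ (n:ℝ)^α := by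
    have h4 : (1:ℝ) ≤ (n:ℝ) := by exact_mod_cast hn1'
    calc (1:ℝ) = 1^α := (Real.one_rpow α).symm
      _ ≤ (n:ℝ)^α := Real.rpow_le_rpow zero_le_one h4 hα.le
  -- radial bound
  have hbreal : T - (M:ℝ) ≤ (n:ℝ) := by
    have h3 : (b:ℝ) + (M:ℝ) = (n1:ℝ) + 1 := by exact_mod_cast hbM
    have h4 : (b:ℝ) ≤ (n:ℝ) := by exact_mod_cast (by omega : b ≤ n)
    linarith
  have hhalf : T/2 ≤ (n:ℝ) := by linarith
  have hβpow : R^(1-1/α) * S = R^β := by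
    rw [hS, ← Real.rpow_add hR0, hβ]
    congr 1
    field_simp
    ring
  have hrad : R - (n:ℝ)^α ≤ 2*(α+1) * R^β := by
    have h5 := radial_bound hα hTpos hhalf hnT
    rw [hTαR] at h5
    have h6 : T - (n:ℝ) ≤ 2*S := by linarith
    have h7 : T^(α-1) = R^(1-1/α) := by
      rw [hTdef, ← Real.rpow_mul hR0.le]
      congr 1
      field_simp
    have h9 : (0:ℝ) ≤ (α+1) * R^(1-1/α) := by positivity
    calc R - (n:ℝ)^α ≤ (α+1)*T^(α-1)*(T - (n:ℝ)) := h5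
      _ = (α+1)*R^(1-1/α)*(T - (n:ℝ)) := by rw [h7]
      _ ≤ (α+1)*R^(1-1/α)*(2*S) := mul_le_mul_of_nonneg_left h6 h9
      _ = 2*(α+1) * (R^(1-1/α) * S) := by ring
      _ = 2*(α+1) * R^β := by rw [hβpow]
  -- angular bound
  set δ : ℝ := (n:ℝ)*θ - Complex.arg z/(2*Real.pi) - k with hδ
  clear_value δ
  have hδk : |δ| ≤ C'/M := by
    have h5 : δ = (j:ℝ)*θ - (Complex.arg z/(2*Real.pi) - (b:ℝ)*θ) - k := by
      rw [hδ, hn]; push_cast; ring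
    rw [h5, hC']; exact hk
  have hδS : |δ| ≤ C'/S := le_trans hδk (by
    apply div_le_div_of_nonneg_left hC'pos.le hSpos hM1)
  have hπC'S : 2*Real.pi*(C'/S) ≤ 1 := by
    rw [← mul_div_assoc, div_le_one hSpos]
    linarith [hKS, hK.ge]
  have h2πδ : |2*Real.pi*δ| ≤ 1 := by
    rw [abs_mul, abs_of_pos (by positivity : (0:ℝ) < 2*Real.pi)]
    have h6 : 2*Real.pi*|δ| ≤ 2*Real.pi*(C'/S) :=
      mul_le_mul_of_nonneg_left hδS (by positivity)
    linarith
  -- the point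
  refine ⟨(((n:ℝ)^α : ℝ) : ℂ) * Complex.exp (((2*Real.pi*(n:ℕ)*θ : ℝ) : ℂ) * Complex.I),
    ⟨n, rfl⟩, ?_, ?_⟩
  · rw [norm_mul, Complex.norm_exp_ofReal_mul_I, mul_one, Complex.norm_real, Real.norm_eq_abs,
      abs_of_nonneg (Real.rpow_nonneg (Nat.cast_nonneg n) α)]
    exact h1ζ
  -- distance estimate
  have hre : (2*Real.pi*(n:ℝ)*θ : ℝ) = Complex.arg z + 2*Real.pi*δ + 2*Real.pi*k := by
    rw [hδ]; field_simp; ring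
  have hexpk : Complex.exp ((k:ℂ) * (2*(Real.pi:ℂ)*Complex.I)) = 1 :=
    Complex.exp_int_mul_two_pi_mul_I k
  have hexp : Complex.exp (((2*Real.pi*(n:ℕ)*θ : ℝ) : ℂ) * Complex.I)
      = Complex.exp ((Complex.arg z : ℂ) * Complex.I) *
        Complex.exp (((2*Real.pi*δ : ℝ) : ℂ) * Complex.I) := by
    have harg : (((2*Real.pi*(n:ℕ)*θ : ℝ) : ℂ)) * Complex.I
        = (Complex.arg z : ℂ) * Complex.I + ((2*Real.pi*δ : ℝ) : ℂ) * Complex.I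
          + (k:ℂ) * (2*(Real.pi:ℂ)*Complex.I) := by
      rw [hre]
      push_cast
      ring
    rw [harg, Complex.exp_add, Complex.exp_add, hexpk, mul_one]
  have hzeq : z = (R:ℂ) * Complex.exp ((Complex.arg z : ℂ) * Complex.I) := by
    rw [hR]; exact (Complex.norm_mul_exp_arg_mul_I z).symm
  have habs1 : ‖Complex.exp ((Complex.arg z : ℂ) * Complex.I)‖ = 1 :=
    Complex.norm_exp_ofReal_mul_I _
  have hsub1 : ‖Complex.exp (((2*Real.pi*δ : ℝ) : ℂ) * Complex.I) - 1‖
      ≤ 2 * |2*Real.pi*δ| := by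
    have h10 : ‖((2*Real.pi*δ : ℝ) : ℂ) * Complex.I‖ = |2*Real.pi*δ| := by
      rw [norm_mul, Complex.norm_I, mul_one, Complex.norm_real, Real.norm_eq_abs]
    calc ‖Complex.exp (((2*Real.pi*δ : ℝ) : ℂ) * Complex.I) - 1‖
        ≤ 2 * ‖((2*Real.pi*δ : ℝ) : ℂ) * Complex.I‖ :=
          Complex.norm_exp_sub_one_le (by rw [h10]; exact h2πδ)
      _ = 2 * |2*Real.pi*δ| := by rw [h10]
  have hRS : R / S = R^β := by
    rw [hβ, Real.rpow_sub hR0, Real.rpow_one, hS]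
  have hRβpos : (0:ℝ) < R^β := Real.rpow_pos_of_pos hR0 β
  have hang : (n:ℝ)^α * ‖Complex.exp (((2*Real.pi*δ : ℝ) : ℂ) * Complex.I) - 1‖
      ≤ 4*Real.pi*C' * R^β := by
    have h11 : |2*Real.pi*δ| ≤ 2*Real.pi*(C'/S) := by
      rw [abs_mul, abs_of_pos (by positivity : (0:ℝ) < 2*Real.pi)]
      exact mul_le_mul_of_nonneg_left hδS (by positivity)
    have h12 : (0:ℝ) ≤ (n:ℝ)^α := Real.rpow_nonneg (Nat.cast_nonneg n) α
    calc (n:ℝ)^α * ‖Complex.exp (((2*Real.pi*δ : ℝ) : ℂ) * Complex.I) - 1‖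
        ≤ R * (2 * (2*Real.pi*(C'/S))) := by
          apply mul_le_mul hnαR (hsub1.trans (by linarith [h11])) (by positivity) hR0.le
      _ = 4*Real.pi*C' * (R/S) := by ring
      _ = 4*Real.pi*C' * R^β := by rw [hRS]
  -- put together
  calc ‖z - (((n:ℝ)^α : ℝ) : ℂ) * Complex.exp (((2*Real.pi*(n:ℕ)*θ : ℝ) : ℂ) * Complex.I)‖
      = ‖((R - (n:ℝ)^α : ℝ) : ℂ) * Complex.exp ((Complex.arg z : ℂ) * Complex.I)
          + (((n:ℝ)^α : ℝ) : ℂ) * Complex.exp ((Complex.arg z : ℂ) * Complex.I)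
            * (1 - Complex.exp (((2*Real.pi*δ : ℝ) : ℂ) * Complex.I))‖ := by
        congr 1
        rw [hexp]
        nth_rewrite 1 [hzeq]
        push_cast
        ring
    _ ≤ ‖((R - (n:ℝ)^α : ℝ) : ℂ) * Complex.exp ((Complex.arg z : ℂ) * Complex.I)‖
        + ‖(((n:ℝ)^α : ℝ) : ℂ) * Complex.exp ((Complex.arg z : ℂ) * Complex.I)
            * (1 - Complex.exp (((2*Real.pi*δ : ℝ) : ℂ) * Complex.I))‖ := by
        apply norm_add_le
    _ ≤ 2*(α+1) * R^β + 4*Real.pi*C' * R^β := by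
        apply add_le_add
        · rw [norm_mul, habs1, mul_one, Complex.norm_real, Real.norm_eq_abs, abs_of_nonneg (by linarith)]
          exact hrad
        · rw [norm_mul, norm_mul, habs1, mul_one, Complex.norm_real, Real.norm_eq_abs,
            abs_of_nonneg (Real.rpow_nonneg (Nat.cast_nonneg n) α),
            ← norm_neg (1 - _), neg_sub]
          exact hang
    _ = r * R^β := by rw [hr]; ring
    _ < r₁ * R^β := by
        apply mul_lt_mul_of_pos_right hr₁ hRβpos
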